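/- Let n ≥ 1 and let (h₁,λ₁),…,(hₙ,λₙ) be pairs of real numbers with hᵢ > 0 and λᵢ ≠ 0 for each i. For h > 0 and λ ≠ 0 define the indefinite-summation operator A_{h,λ} on functions g : ℝ → ℝ by (A_{h,λ} g)(t) = ∑_{s=1}^{⌊t/h⌋} λ^{s−1} g(t − s·h) (empty sum when ⌊t/h⌋ ≤ 0), and the difference operator D_{h,λ} by (D_{h,λ} g)(t) = g(t+h) − λ·g(t). Given f : ℝ → ℝ, define y_p = (A_{h₁,λ₁} ∘ A_{h₂,λ₂} ∘ ⋯ ∘ A_{hₙ,λₙ}) f. Then for every real t ≥ 0, (D_{hₙ,λₙ} ∘ ⋯ ∘ D_{h₂,λ₂} ∘ D_{h₁,λ₁}) y_p (t) = f(t); that is, y_p is a particular solution on [0,∞) of the difference equation Φ(E) y = f with Φ(E) = ∏_{i=1}^{n} (E^{hᵢ} − λᵢ I). -/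

import Mathlib

/-- The indefinite-summation operator `A_{h,λ}`:
`(A_{h,λ} g)(t) = ∑_{s=1}^{⌊t/h⌋} λ^{s-1} g(t - s·h)` (empty sum when `⌊t/h⌋ ≤ 0`). -/
noncomputable def sumOp (h lam : ℝ) (g : ℝ → ℝ) : ℝ → ℝ :=
  fun t => ∑ s ∈ Finset.Icc (1 : ℤ) ⌊t / h⌋, lam ^ (s - 1) * g (t - (s : ℝ) * h)

/-- The difference operator `D_{h,λ}`: `(D_{h,λ} g)(t) = g(t+h) - λ·g(t)`. -/
def diffOp (h lam : ℝ) (g : ℝ → ℝ) : ℝ → ℝ :=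
  fun t => g (t + h) - lam * g t

lemma key (h lam : ℝ) (hh : 0 < h) (hlam : lam ≠ 0) (g : ℝ → ℝ) (t : ℝ) (ht : 0 ≤ t) :
    diffOp h lam (sumOp h lam g) t = g t := by
  have hm : (0:ℤ) ≤ ⌊t/h⌋ := Int.floor_nonneg.mpr (div_nonneg ht hh.le)
  have hfl : ⌊(t+h)/h⌋ = ⌊t/h⌋ + 1 := by
    rw [add_div, div_self hh.ne', Int.floor_add_one]
  simp only [diffOp, sumOp, hfl]
  have hset : Finset.Icc (1:ℤ) (⌊t/h⌋+1)
      = insert 1 ((Finset.Icc (1:ℤ) ⌊t/h⌋).image (· + 1)) := by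
    ext x
    simp only [Finset.mem_Icc, Finset.mem_insert, Finset.mem_image]
    constructor
    · rintro ⟨h1, h2⟩
      rcases eq_or_lt_of_le h1 with rfl | h1'
      · exact Or.inl rfl
      · exact Or.inr ⟨x - 1, ⟨by omega, by omega⟩, by omega⟩
    · rintro (rfl | ⟨s, ⟨hs1, hs2⟩, rfl⟩) <;> omega
  rw [hset, Finset.sum_insert, Finset.sum_image]
  · rw [Finset.mul_sum]
    have h1 : lam ^ ((1:ℤ) - 1) * g (t + h - (1:ℤ) * h) = g t := by
      norm_num
    rw [h1]
    have : ∀ s ∈ Finset.Icc (1:ℤ) ⌊t/h⌋,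
        lam ^ (s + 1 - 1) * g (t + h - ((s + 1 : ℤ) : ℝ) * h)
          = lam * (lam ^ (s - 1) * g (t - (s:ℝ) * h)) := by
      intro s hs
      have : lam ^ (s + 1 - 1) = lam * lam ^ (s - 1) := by
        rw [← zpow_one_add₀ hlam]; ring_nf
      rw [this]
      push_cast
      ring_nf
    rw [Finset.sum_congr rfl this]
    push_cast
    ring
  · intro a _ b _ hab; simp only [add_left_inj] at hab; omega
  · simp only [Finset.mem_image, Finset.mem_Icc]
    rintro ⟨s, ⟨hs1, _⟩, hs⟩; omega

lemma fold_congr (L : List (ℝ × ℝ)) (hpos : ∀ p ∈ L, 0 < p.1)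
    (g₁ g₂ : ℝ → ℝ) (hg : ∀ t, 0 ≤ t → g₁ t = g₂ t) :
    ∀ t, 0 ≤ t → L.foldl (fun g p => diffOp p.1 p.2 g) g₁ t
      = L.foldl (fun g p => diffOp p.1 p.2 g) g₂ t := by
  induction L generalizing g₁ g₂ with
  | nil => exact hg
  | cons p L ih =>
    intro t ht
    simp only [List.foldl_cons]
    refine ih (fun q hq => hpos q (List.mem_cons_of_mem _ hq)) _ _ ?_ t ht
    intro u hu
    have hp := hpos p (List.mem_cons_self)
    simp only [diffOp]
    rw [hg u hu, hg (u + p.1) (by linarith)]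

lemma main_aux (L : List (ℝ × ℝ)) (hpos : ∀ p ∈ L, 0 < p.1) (hne : ∀ p ∈ L, p.2 ≠ 0)
    (f : ℝ → ℝ) :
    ∀ t, 0 ≤ t → L.foldl (fun g p => diffOp p.1 p.2 g)
        (L.foldr (fun p g => sumOp p.1 p.2 g) f) t = f t := by
  induction L with
  | nil => intro t _; simp
  | cons p L ih =>
    intro t ht
    simp only [List.foldl_cons, List.foldr_cons]
    have hp := hpos p (List.mem_cons_self)
    have hl := hne p (List.mem_cons_self)
    have h1 : ∀ u, 0 ≤ u →
        diffOp p.1 p.2 (sumOp p.1 p.2 (L.foldr (fun p g => sumOp p.1 p.2 g) f)) u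
          = (L.foldr (fun p g => sumOp p.1 p.2 g) f) u :=
      fun u hu => key _ _ hp hl _ u hu
    rw [fold_congr L (fun q hq => hpos q (List.mem_cons_of_mem _ hq)) _ _ h1 t ht]
    exact ih (fun q hq => hpos q (List.mem_cons_of_mem _ hq))
      (fun q hq => hne q (List.mem_cons_of_mem _ hq)) t ht

/-- For pairs `(h₁,λ₁),…,(hₙ,λₙ)` (given as a nonempty list `L`, `n ≥ 1`) with `hᵢ > 0` and
`λᵢ ≠ 0`, the function `y_p = (A_{h₁,λ₁} ∘ ⋯ ∘ A_{hₙ,λₙ}) f` satisfies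
`(D_{hₙ,λₙ} ∘ ⋯ ∘ D_{h₁,λ₁}) y_p (t) = f(t)` for every `t ≥ 0`; `D_{h₁,λ₁}` is applied
first, matching `Φ(E) = ∏ᵢ (E^{hᵢ} - λᵢ I)`. -/
theorem stmt_19 (L : List (ℝ × ℝ)) (hL : L ≠ [])
    (hpos : ∀ p ∈ L, 0 < p.1) (hne : ∀ p ∈ L, p.2 ≠ 0)
    (f : ℝ → ℝ)
    (yp : ℝ → ℝ) (hyp : yp = L.foldr (fun p g => sumOp p.1 p.2 g) f) :
    ∀ t : ℝ, 0 ≤ t → L.foldl (fun g p => diffOp p.1 p.2 g) yp t = f t := by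
  subst hyp
  exact main_aux L hpos hne f
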